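/- With λ > 0, u₀ = 1/(4·sinh²(λ/2)) and φ(u) = λu - (1+√(1+4u))/2 - u·log((√(1+4u)+1)/(√(1+4u)-1)), the second derivative satisfies φ''(u₀) = tanh(λ/2)/u₀; in particular φ''(u₀) > 0. -/

import Mathlib

open Real Filter

private lemma sqrt_gt_one' {u : ℝ} (hu : 0 < u) : 1 < Real.sqrt (1 + 4*u) := by
  have h : Real.sqrt 1 < Real.sqrt (1 + 4*u) :=
    Real.sqrt_lt_sqrt (by norm_num) (by linarith)
  simpa using h

private lemma hasDerivAt_s' {u : ℝ} (hu : 0 < u) :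
    HasDerivAt (fun u : ℝ => Real.sqrt (1 + 4*u)) (2 / Real.sqrt (1+4*u)) u := by
  have h1 : HasDerivAt (fun u : ℝ => 1 + 4*u) 4 u := by
    simpa using ((hasDerivAt_id u).const_mul 4).const_add 1
  have h2 := (Real.hasDerivAt_sqrt (by positivity : (1:ℝ)+4*u ≠ 0)).comp u h1
  have hs : (0:ℝ) < Real.sqrt (1+4*u) := by positivity
  refine h2.congr_deriv ?_
  field_simp
  ring

private lemma hasDerivAt_L' {u : ℝ} (hu : 0 < u) :
    HasDerivAt (fun u : ℝ => Real.log (Real.sqrt (1+4*u) + 1) - Real.log (Real.sqrt (1+4*u) - 1))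
      (-(1/(u * Real.sqrt (1+4*u)))) u := by
  have hs1 : 1 < Real.sqrt (1+4*u) := sqrt_gt_one' hu
  have hsq : Real.sqrt (1+4*u)^2 = 1+4*u := Real.sq_sqrt (by linarith)
  have h1 := ((hasDerivAt_s' hu).add_const 1).log
    (by linarith : Real.sqrt (1+4*u) + 1 ≠ 0)
  have h2 := ((hasDerivAt_s' hu).sub_const 1).log
    (by linarith : Real.sqrt (1+4*u) - 1 ≠ 0)
  have h3 := h1.sub h2
  refine h3.congr_deriv ?_
  set s := Real.sqrt (1+4*u) with hs
  have hsne : s ≠ 0 := by linarith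
  have h4 : s + 1 ≠ 0 := by linarith
  have h5 : s - 1 ≠ 0 := by linarith
  field_simp
  nlinarith [hsq]

/-- first derivative -/
private lemma hasDerivAt_g (l : ℝ) {u : ℝ} (hu : 0 < u) :
    HasDerivAt (fun u : ℝ => l*u - (1 + Real.sqrt (1+4*u))/2 -
        u * Real.log ((Real.sqrt (1+4*u)+1)/(Real.sqrt (1+4*u)-1)))
      (l - Real.log ((Real.sqrt (1+4*u)+1)/(Real.sqrt (1+4*u)-1))) u := by
  have hs1 : 1 < Real.sqrt (1+4*u) := sqrt_gt_one' hu
  -- g̃ with log of quotient expanded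
  have hg : HasDerivAt (fun u : ℝ => l*u - (1 + Real.sqrt (1+4*u))/2 -
      u * (Real.log (Real.sqrt (1+4*u)+1) - Real.log (Real.sqrt (1+4*u)-1)))
      (l - (Real.log (Real.sqrt (1+4*u)+1) - Real.log (Real.sqrt (1+4*u)-1))) u := by
    have h1 : HasDerivAt (fun u : ℝ => l*u) l u := by
      simpa using (hasDerivAt_id u).const_mul l
    have h2 : HasDerivAt (fun u : ℝ => (1 + Real.sqrt (1+4*u))/2)
        (1 / Real.sqrt (1+4*u)) u := by
      have := ((hasDerivAt_s' hu).const_add 1).div_const 2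
      refine this.congr_deriv ?_
      field_simp
    have h3 := (hasDerivAt_id u).mul (hasDerivAt_L' hu)
    have h := (h1.sub h2).sub h3
    refine h.congr_deriv ?_
    have hsne : Real.sqrt (1+4*u) ≠ 0 := by linarith
    have hune : u ≠ 0 := ne_of_gt hu
    simp only [id]
    field_simp
    ring
  have heq : (fun u : ℝ => l*u - (1 + Real.sqrt (1+4*u))/2 -
      u * Real.log ((Real.sqrt (1+4*u)+1)/(Real.sqrt (1+4*u)-1))) =ᶠ[nhds u]
      (fun u : ℝ => l*u - (1 + Real.sqrt (1+4*u))/2 -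
      u * (Real.log (Real.sqrt (1+4*u)+1) - Real.log (Real.sqrt (1+4*u)-1))) := by
    filter_upwards [eventually_gt_nhds hu] with v hv
    have hs1v : 1 < Real.sqrt (1+4*v) := sqrt_gt_one' hv
    rw [Real.log_div (by linarith) (by linarith)]
  have := hg.congr_of_eventuallyEq heq
  have hlog : Real.log ((Real.sqrt (1+4*u)+1)/(Real.sqrt (1+4*u)-1))
      = Real.log (Real.sqrt (1+4*u)+1) - Real.log (Real.sqrt (1+4*u)-1) :=
    Real.log_div (by linarith) (by linarith)
  rw [hlog]
  exact this

/-- second derivative -/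
private lemma hasDerivAt_g' (l : ℝ) {u : ℝ} (hu : 0 < u) :
    HasDerivAt (fun u : ℝ => l - Real.log ((Real.sqrt (1+4*u)+1)/(Real.sqrt (1+4*u)-1)))
      (1/(u * Real.sqrt (1+4*u))) u := by
  have hg : HasDerivAt (fun u : ℝ => l -
      (Real.log (Real.sqrt (1+4*u)+1) - Real.log (Real.sqrt (1+4*u)-1)))
      (1/(u * Real.sqrt (1+4*u))) u := by
    have := (hasDerivAt_L' hu).const_sub l
    simpa using this
  have heq : (fun u : ℝ => l - Real.log ((Real.sqrt (1+4*u)+1)/(Real.sqrt (1+4*u)-1)))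
      =ᶠ[nhds u] (fun u : ℝ => l -
      (Real.log (Real.sqrt (1+4*u)+1) - Real.log (Real.sqrt (1+4*u)-1))) := by
    filter_upwards [eventually_gt_nhds hu] with v hv
    have hs1v : 1 < Real.sqrt (1+4*v) := sqrt_gt_one' hv
    rw [Real.log_div (by linarith) (by linarith)]
  exact hg.congr_of_eventuallyEq heq

theorem phi_second_deriv_at_u0 (l : ℝ) (hl : 0 < l)
    (φ : ℝ → ℝ)
    (hφ : ∀ u : ℝ, 0 < u → φ u =
      l * u - (1 + Real.sqrt (1 + 4 * u)) / 2 -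
        u * Real.log ((Real.sqrt (1 + 4 * u) + 1) / (Real.sqrt (1 + 4 * u) - 1)))
    (u₀ : ℝ) (hu₀ : u₀ = 1 / (4 * (Real.sinh (l / 2)) ^ 2)) :
    deriv (deriv φ) u₀ = Real.tanh (l / 2) / u₀ ∧ 0 < deriv (deriv φ) u₀ := by
  have hsinh : 0 < Real.sinh (l/2) := Real.sinh_pos_iff.2 (by linarith)
  have hu0 : 0 < u₀ := by rw [hu₀]; positivity
  -- deriv φ agrees with u ↦ l - log(...) near any positive point
  have hderiv : ∀ u : ℝ, 0 < u → deriv φ u =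
      l - Real.log ((Real.sqrt (1+4*u)+1)/(Real.sqrt (1+4*u)-1)) := by
    intro u hu
    have heq : φ =ᶠ[nhds u] (fun u : ℝ => l*u - (1 + Real.sqrt (1+4*u))/2 -
        u * Real.log ((Real.sqrt (1+4*u)+1)/(Real.sqrt (1+4*u)-1))) := by
      filter_upwards [eventually_gt_nhds hu] with v hv
      simpa using hφ v hv
    have := (hasDerivAt_g l hu).congr_of_eventuallyEq heq
    exact this.deriv
  have heq2 : deriv φ =ᶠ[nhds u₀]
      (fun u : ℝ => l - Real.log ((Real.sqrt (1+4*u)+1)/(Real.sqrt (1+4*u)-1))) := by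
    filter_upwards [eventually_gt_nhds hu0] with v hv
    exact hderiv v hv
  have h2 := (hasDerivAt_g' l hu0).congr_of_eventuallyEq heq2
  have hd2 : deriv (deriv φ) u₀ = 1/(u₀ * Real.sqrt (1+4*u₀)) := h2.deriv
  -- compute sqrt(1+4u₀)
  have hcosh : 0 < Real.cosh (l/2) := Real.cosh_pos (l/2)
  have hsq : 1 + 4*u₀ = (Real.cosh (l/2) / Real.sinh (l/2))^2 := by
    rw [hu₀]
    have := Real.cosh_sq (l/2)
    field_simp
    nlinarith [Real.cosh_sq (l/2)]
  have hsqrt : Real.sqrt (1+4*u₀) = Real.cosh (l/2) / Real.sinh (l/2) := by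
    rw [hsq]
    exact Real.sqrt_sq (by positivity)
  have hune : u₀ ≠ 0 := ne_of_gt hu0
  have hsne : Real.sinh (l/2) ≠ 0 := ne_of_gt hsinh
  have hcne : Real.cosh (l/2) ≠ 0 := ne_of_gt hcosh
  have hval : deriv (deriv φ) u₀ = Real.tanh (l/2) / u₀ := by
    rw [hd2, hsqrt, Real.tanh_eq_sinh_div_cosh]
    field_simp
  refine ⟨hval, ?_⟩
  rw [hval]
  have htanh : 0 < Real.tanh (l/2) := by
    rw [Real.tanh_eq_sinh_div_cosh]; positivity
  positivity
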